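/- Two Young functions ρ₁ and ρ₂ define equivalent Orlicz norms on a probability space (i.e., there exist constants c, C > 0 with c‖X‖_{ρ₁} ≤ ‖X‖_{ρ₂} ≤ C‖X‖_{ρ₁} for all random variables X on any probability space) if and only if ρ₁ and ρ₂ are equivalent, i.e., each dominates the other in the sense ρᵢ(x) ≤ C₁ρⱼ(C₂x) for all sufficiently large x. -/

import Mathlib

open Filter Topology MeasureTheory
open scoped ENNReal
noncomputable section

/-- A Young function: strictly increasing, convex on `[0,∞)`, vanishing at `0`. -/
def IsYoung (f : ℝ → ℝ) : Prop :=
  StrictMonoOn f (Set.Ici 0) ∧ ConvexOn ℝ (Set.Ici 0) f ∧ f 0 = 0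

/-- Legendre transform of a real function (sup over `y ≥ 0`), `ℝ≥0∞`-valued. -/
def Leg (f : ℝ → ℝ) (x : ℝ) : ℝ≥0∞ :=
  ⨆ y : {y : ℝ // 0 ≤ y}, ENNReal.ofReal (x * y - f y)

/-- Legendre transform of an `ℝ≥0∞`-valued function. -/
def LegE (f : ℝ → ℝ≥0∞) (x : ℝ) : ℝ≥0∞ :=
  ⨆ y : {y : ℝ // 0 ≤ y}, (ENNReal.ofReal (x * y) - f y)

/-- Monotone extension of a real function on `[0,∞)` to `ℝ≥0∞` arguments. -/
def extE (f : ℝ → ℝ) (t : ℝ≥0∞) : ℝ≥0∞ :=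
  ⨆ s : {s : ℝ // 0 ≤ s ∧ ENNReal.ofReal s ≤ t}, ENNReal.ofReal (f s)

/-- Monotone extension of an `ℝ≥0∞`-valued function to `ℝ≥0∞` arguments. -/
def extLT (f : ℝ → ℝ≥0∞) (t : ℝ≥0∞) : ℝ≥0∞ :=
  ⨆ s : {s : ℝ // 0 ≤ s ∧ ENNReal.ofReal s ≤ t}, f s

/-- Generalized (right-continuous) inverse of an `ℝ≥0∞`-valued function. -/
def invE (g : ℝ → ℝ≥0∞) (t : ℝ≥0∞) : ℝ≥0∞ :=
  ⨅ s : {s : ℝ // 0 ≤ s ∧ t ≤ g s}, ENNReal.ofReal s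

/-- `ρ(x) = sup_{y ≥ 0} (φ(xy) - ψ(y))/y`. -/
def rhoSup (φ ψ : ℝ → ℝ) (x : ℝ) : ℝ≥0∞ :=
  ⨆ y : {y : ℝ // 0 ≤ y}, ENNReal.ofReal ((φ (x * y) - ψ y) / y)

/-- `ζ(x) = sup_{y ≥ 0} (φ(xy) - ψ(y)/y)`. -/
def zetaSup (φ ψ : ℝ → ℝ) (x : ℝ) : ℝ≥0∞ :=
  ⨆ y : {y : ℝ // 0 ≤ y}, ENNReal.ofReal (φ (x * y) - ψ y / y)

/-- Domination order on real functions: `f(x) ≤ C₁ g(C₂ x)` for large `x`. -/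
def DominR (f g : ℝ → ℝ) : Prop :=
  ∃ C₁ C₂ x₀ : ℝ, 0 < C₁ ∧ 0 < C₂ ∧ 0 < x₀ ∧ ∀ x ≥ x₀, f x ≤ C₁ * g (C₂ * x)

/-- Equivalence of real functions: mutual domination. -/
def EquivR (f g : ℝ → ℝ) : Prop := DominR f g ∧ DominR g f

/-- Domination order on `ℝ≥0∞`-valued functions. -/
def DominE (f g : ℝ → ℝ≥0∞) : Prop :=
  ∃ C₁ C₂ x₀ : ℝ, 0 < C₁ ∧ 0 < C₂ ∧ 0 < x₀ ∧
    ∀ x ≥ x₀, f x ≤ ENNReal.ofReal C₁ * g (C₂ * x)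

/-- Equivalence of `ℝ≥0∞`-valued functions: mutual domination. -/
def EquivE (f g : ℝ → ℝ≥0∞) : Prop := DominE f g ∧ DominE g f

/-- The Orlicz norm associated to a Young function on a probability space. -/
def orliczNorm {Ω : Type} [MeasurableSpace Ω] (μ : Measure Ω)
    (ρ : ℝ → ℝ) (X : Ω → ℝ) : ℝ≥0∞ :=
  sInf {c : ℝ≥0∞ | ∃ C : ℝ, 0 < C ∧ c = ENNReal.ofReal C ∧
    ∫⁻ ω, ENNReal.ofReal (ρ (|X ω| / C)) ∂μ ≤ 1}

variable {ρ : ℝ → ℝ}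

lemma young_nonneg (hρ : IsYoung ρ) {x : ℝ} (hx : 0 ≤ x) : 0 ≤ ρ x := by
  rcases eq_or_lt_of_le hx with h | h
  · simp [← h, hρ.2.2]
  · exact le_of_lt (hρ.2.2 ▸ hρ.1 (Set.self_mem_Ici) hx h)

lemma young_pos (hρ : IsYoung ρ) {x : ℝ} (hx : 0 < x) : 0 < ρ x :=
  hρ.2.2 ▸ hρ.1 Set.self_mem_Ici hx.le hx

lemma young_mono (hρ : IsYoung ρ) : MonotoneOn ρ (Set.Ici 0) := hρ.1.monotoneOn

lemma young_scale (hρ : IsYoung ρ) {l y : ℝ} (hl : 1 ≤ l) (hy : 0 ≤ y) :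
    l * ρ (y / l) ≤ ρ y := by
  have hl0 : 0 < l := lt_of_lt_of_le one_pos hl
  have ha : (0:ℝ) ≤ 1/l := by positivity
  have hb : (0:ℝ) ≤ 1 - 1/l := by
    rw [sub_nonneg, div_le_one hl0]; exact hl
  have hab : 1/l + (1 - 1/l) = 1 := by ring
  have h := hρ.2.1.2 (Set.mem_Ici.2 hy) Set.self_mem_Ici ha hb hab
  simp only [smul_eq_mul, mul_zero, add_zero, hρ.2.2] at h
  have h2 : ρ (y / l) ≤ ρ y / l := by
    rw [one_div, inv_mul_eq_div] at h
    simpa [div_eq_inv_mul] using h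
  calc l * ρ (y / l) ≤ l * (ρ y / l) := mul_le_mul_of_nonneg_left h2 hl0.le
    _ = ρ y := by field_simp

lemma young_contOn (hρ : IsYoung ρ) : ContinuousOn ρ (Set.Ici 0) := by
  have hIoi : ContinuousOn ρ (Set.Ioi 0) :=
    (hρ.2.1.subset Set.Ioi_subset_Ici_self (convex_Ioi 0)).continuousOn isOpen_Ioi
  intro x hx
  rcases eq_or_lt_of_le (Set.mem_Ici.1 hx) with h | h
  · -- x = 0
    subst h
    rw [ContinuousWithinAt, hρ.2.2]
    apply squeeze_zero'
    · filter_upwards [self_mem_nhdsWithin] with y hy using young_nonneg hρ hy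
    · have h1 : ∀ᶠ y in 𝓝[Set.Ici 0] (0:ℝ), y < 1 :=
        eventually_nhdsWithin_of_eventually_nhds (eventually_lt_nhds one_pos)
      filter_upwards [self_mem_nhdsWithin, h1] with y hy hy1
      have := hρ.2.1.2 (Set.mem_Ici.2 (zero_le_one)) Set.self_mem_Ici hy
        (by linarith : (0:ℝ) ≤ 1 - y) (by ring)
      simpa [hρ.2.2] using this
    · have : Tendsto (fun y : ℝ => y * ρ 1) (𝓝 0) (𝓝 0) := by
        simpa using (continuous_mul_right (ρ 1)).tendsto (0:ℝ)
      exact this.mono_left nhdsWithin_le_nhds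
  · exact ((hIoi.continuousAt (isOpen_Ioi.mem_nhds h)).continuousWithinAt)

lemma young_surj (hρ : IsYoung ρ) {t : ℝ} (ht : 0 ≤ t) : ∃ s, 0 ≤ s ∧ ρ s = t := by
  have h1 : 0 < ρ 1 := young_pos hρ one_pos
  set a : ℝ := max 1 (t / ρ 1) with ha
  have ha1 : 1 ≤ a := le_max_left _ _
  have ha0 : 0 ≤ a := le_trans zero_le_one ha1
  have hta : t ≤ ρ a := by
    have := young_scale hρ ha1 (y := a) ha0
    rw [div_self (by linarith : a ≠ 0)] at this
    have h2 : t / ρ 1 * ρ 1 ≤ a * ρ 1 :=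
      mul_le_mul_of_nonneg_right (le_max_right _ _) h1.le
    rw [div_mul_cancel₀ _ h1.ne'] at h2
    linarith
  have := intermediate_value_Icc ha0 (young_contOn hρ |>.mono (Set.Icc_subset_Ici_self))
  have hmem : t ∈ Set.Icc (ρ 0) (ρ a) := ⟨by rw [hρ.2.2]; exact ht, hta⟩
  obtain ⟨s, hs, hst⟩ := this hmem
  exact ⟨s, hs.1, hst⟩

/-- Bernoulli-type measure on `Bool` with mass `1/t` at `true`. -/
def bern (t : ℝ) : Measure Bool :=
  ENNReal.ofReal (1/t) • Measure.dirac true + ENNReal.ofReal (1 - 1/t) • Measure.dirac false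

/-- indicator random variable -/
def indX : Bool → ℝ := fun b => if b then 1 else 0

lemma bern_prob {t : ℝ} (ht : 1 ≤ t) : IsProbabilityMeasure (bern t) := by
  have ht0 : 0 < t := lt_of_lt_of_le one_pos ht
  constructor
  have h1 : (0:ℝ) ≤ 1/t := by positivity
  have h2 : (0:ℝ) ≤ 1 - 1/t := by
    rw [sub_nonneg, div_le_one ht0]; exact ht
  simp only [bern, Measure.add_apply, Measure.smul_apply, smul_eq_mul,
    Measure.dirac_apply', MeasurableSet.univ, Set.indicator_of_mem (Set.mem_univ _),
    Pi.one_apply, mul_one]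
  rw [← ENNReal.ofReal_add h1 h2, show 1/t + (1 - 1/t) = 1 by ring, ENNReal.ofReal_one]

lemma bern_lintegral {t : ℝ} (ht : 1 ≤ t) (f : Bool → ℝ≥0∞) :
    ∫⁻ ω, f ω ∂(bern t) = ENNReal.ofReal (1/t) * f true + ENNReal.ofReal (1 - 1/t) * f false := by
  rw [bern, lintegral_add_measure, lintegral_smul_measure, lintegral_smul_measure,
    lintegral_dirac, lintegral_dirac, smul_eq_mul, smul_eq_mul]

lemma bern_norm (hρ : IsYoung ρ) {t s : ℝ} (ht : 1 ≤ t) (hs : 0 < s) (hst : ρ s = t) :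
    orliczNorm (bern t) ρ indX = ENNReal.ofReal (1/s) := by
  have ht0 : 0 < t := lt_of_lt_of_le one_pos ht
  have hcond : ∀ C : ℝ, 0 < C →
      ((∫⁻ ω, ENNReal.ofReal (ρ (|indX ω| / C)) ∂(bern t) ≤ 1) ↔ 1/s ≤ C) := by
    intro C hC
    rw [bern_lintegral ht]
    simp only [show indX true = 1 from rfl, show indX false = 0 from rfl, abs_one, abs_zero,
      zero_div, hρ.2.2, ENNReal.ofReal_zero, mul_zero, add_zero]
    rw [← ENNReal.ofReal_mul (by positivity), ← ENNReal.ofReal_one,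
      ENNReal.ofReal_le_ofReal_iff zero_le_one]
    constructor
    · intro h
      have h2 : ρ (1/C) ≤ t := by
        have := mul_le_mul_of_nonneg_left h ht0.le
        rw [mul_one, ← mul_assoc, mul_one_div, div_self ht0.ne', one_mul] at this
        exact this
      have h3 : 1/C ≤ s := by
        rw [← hst] at h2
        exact (hρ.1.le_iff_le (Set.mem_Ici.2 (by positivity)) (Set.mem_Ici.2 hs.le)).1 h2
      rw [div_le_iff₀ hC] at h3
      rw [div_le_iff₀ hs]
      nlinarith
    · intro h
      have h1C : 1/C ≤ s := by
        rw [div_le_iff₀ hs] at h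
        rw [div_le_iff₀ hC]
        nlinarith
      have h2 : ρ (1/C) ≤ t := by
        rw [← hst]
        exact young_mono hρ (Set.mem_Ici.2 (by positivity)) (Set.mem_Ici.2 hs.le) h1C
      calc 1/t * ρ (1/C) ≤ 1/t * t := by
            exact mul_le_mul_of_nonneg_left h2 (by positivity)
        _ = 1 := by field_simp
  apply le_antisymm
  · apply sInf_le
    refine ⟨1/s, by positivity, rfl, ?_⟩
    exact (hcond _ (by positivity)).2 le_rfl
  · apply le_sInf
    rintro c ⟨C, hC, rfl, hint⟩
    exact ENNReal.ofReal_le_ofReal ((hcond C hC).1 hint)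
/-- From the inverse-comparison information `c · ρ₂⁻¹(t) ≤ ρ₁⁻¹(t)` for `t ≥ 1`,
deduce domination. -/
lemma forward_half {f g : ℝ → ℝ} (hf : IsYoung f) (hg : IsYoung g) {c : ℝ} (hc : 0 < c)
    (h : ∀ t ≥ (1:ℝ), ∀ s₁ s₂ : ℝ, 0 < s₁ → 0 < s₂ → f s₁ = t → g s₂ = t → c * s₂ ≤ s₁) :
    DominR f g := by
  obtain ⟨s₀, hs₀, hgs₀⟩ := young_surj hg (zero_le_one)
  have hs₀pos : 0 < s₀ := by
    rcases eq_or_lt_of_le hs₀ with hh | hh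
    · exfalso; rw [← hh, hg.2.2] at hgs₀; norm_num at hgs₀
    · exact hh
  refine ⟨1, 1/c, c * s₀, one_pos, by positivity, by positivity, ?_⟩
  intro x hx
  have hx0 : 0 < x := lt_of_lt_of_le (by positivity) hx
  have hxc : s₀ ≤ x / c := by
    rw [le_div_iff₀ hc, mul_comm]; exact hx
  have hxc0 : 0 < x / c := by positivity
  set t := g (x / c) with htdef
  have ht1 : 1 ≤ t := by
    rw [← hgs₀]
    exact young_mono hg (Set.mem_Ici.2 hs₀) (Set.mem_Ici.2 hxc0.le) hxc
  obtain ⟨s₁, hs₁, hfs₁⟩ := young_surj hf (le_trans zero_le_one ht1)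
  have hs₁pos : 0 < s₁ := by
    rcases eq_or_lt_of_le hs₁ with hh | hh
    · exfalso; rw [← hh, hf.2.2] at hfs₁; linarith
    · exact hh
  have hkey := h t ht1 s₁ (x/c) hs₁pos hxc0 hfs₁ rfl
  have hxs₁ : x ≤ s₁ := by
    have : c * (x / c) = x := by field_simp
    linarith [hkey, this.ge]
  calc f x ≤ f s₁ := young_mono hf (Set.mem_Ici.2 hx0.le) (Set.mem_Ici.2 hs₁) hxs₁
    _ = t := hfs₁
    _ = 1 * g (1/c * x) := by rw [one_mul, one_div, inv_mul_eq_div]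

/-- Domination implies a uniform one-sided Orlicz norm comparison. -/
lemma domin_norm {f g : ℝ → ℝ} (hf : IsYoung f) (hg : IsYoung g) (hd : DominR f g) :
    ∃ M : ℝ, 0 < M ∧ ∀ (Ω : Type) (mΩ : MeasurableSpace Ω) (μ : Measure Ω),
      IsProbabilityMeasure μ → ∀ X : Ω → ℝ,
        orliczNorm μ f X ≤ ENNReal.ofReal M * orliczNorm μ g X := by
  obtain ⟨C₁, C₂, x₀, hC₁, hC₂, hx₀, hdom⟩ := hd
  set l : ℝ := max 1 (C₁ + f x₀) with hl
  have hl1 : 1 ≤ l := le_max_left _ _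
  have hl0 : 0 < l := lt_of_lt_of_le one_pos hl1
  set M : ℝ := l * C₂ with hM
  have hMpos : 0 < M := by positivity
  refine ⟨M, hMpos, ?_⟩
  intro Ω mΩ μ hμ X
  haveI := hμ
  -- key integral claim
  have key : ∀ K : ℝ, 0 < K →
      (∫⁻ ω, ENNReal.ofReal (g (|X ω| / K)) ∂μ ≤ 1) →
      (∫⁻ ω, ENNReal.ofReal (f (|X ω| / (M * K))) ∂μ ≤ 1) := by
    intro K hK hint
    have hfx₀ : 0 ≤ f x₀ := young_nonneg hf hx₀.le
    -- pointwise inequality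
    have hpw : ∀ ω, l * f (|X ω| / (M * K)) ≤ C₁ * g (|X ω| / K) + f x₀ := by
      intro ω
      set z : ℝ := |X ω| / (C₂ * K) with hz
      have hz0 : 0 ≤ z := by positivity
      have e1 : |X ω| / (M * K) = z / l := by
        rw [hz, div_div, hM]; ring_nf
      have e2 : |X ω| / K = C₂ * z := by
        rw [hz]; field_simp
      rw [e1, e2]
      have h1 : l * f (z / l) ≤ f z := young_scale hf hl1 hz0
      rcases le_or_gt x₀ z with hcase | hcase
      · have := hdom z hcase
        linarith
      · have h2 : f z ≤ f x₀ :=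
          young_mono hf (Set.mem_Ici.2 hz0) (Set.mem_Ici.2 hx₀.le) hcase.le
        have h3 : 0 ≤ C₁ * g (C₂ * z) := by
          have : 0 ≤ g (C₂ * z) := young_nonneg hg (by positivity)
          positivity
        linarith
    -- integrate
    have hlne : ENNReal.ofReal l ≠ 0 := by
      simp [ENNReal.ofReal_eq_zero]; linarith
    have hstep : ENNReal.ofReal l * ∫⁻ ω, ENNReal.ofReal (f (|X ω| / (M * K))) ∂μ
        ≤ ENNReal.ofReal l * 1 := by
      rw [← lintegral_const_mul' _ _ ENNReal.ofReal_ne_top]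
      calc ∫⁻ ω, ENNReal.ofReal l * ENNReal.ofReal (f (|X ω| / (M*K))) ∂μ
          ≤ ∫⁻ ω, (ENNReal.ofReal (f x₀) + ENNReal.ofReal C₁ * ENNReal.ofReal (g (|X ω| / K))) ∂μ := by
            apply lintegral_mono
            intro ω
            dsimp only
            rw [← ENNReal.ofReal_mul hl0.le, ← ENNReal.ofReal_mul hC₁.le,
              ← ENNReal.ofReal_add hfx₀ (by
                have : 0 ≤ g (|X ω| / K) := young_nonneg hg (by positivity)
                positivity)]
            exact ENNReal.ofReal_le_ofReal (by linarith [hpw ω])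
        _ = ENNReal.ofReal (f x₀) * μ Set.univ
              + ∫⁻ ω, ENNReal.ofReal C₁ * ENNReal.ofReal (g (|X ω| / K)) ∂μ := by
            rw [lintegral_add_left measurable_const, lintegral_const]
        _ = ENNReal.ofReal (f x₀)
              + ENNReal.ofReal C₁ * ∫⁻ ω, ENNReal.ofReal (g (|X ω| / K)) ∂μ := by
            rw [measure_univ, mul_one, lintegral_const_mul' _ _ ENNReal.ofReal_ne_top]
        _ ≤ ENNReal.ofReal (f x₀) + ENNReal.ofReal C₁ * 1 := by
            gcongr
        _ = ENNReal.ofReal (C₁ + f x₀) := by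
            rw [mul_one, ENNReal.ofReal_add hC₁.le hfx₀, add_comm]
        _ ≤ ENNReal.ofReal l * 1 := by
            rw [mul_one]
            exact ENNReal.ofReal_le_ofReal (le_max_right _ _)
    exact (ENNReal.mul_le_mul_iff_right hlne ENNReal.ofReal_ne_top).1 hstep
  -- from key to the norm inequality
  set Sf := {c : ℝ≥0∞ | ∃ C : ℝ, 0 < C ∧ c = ENNReal.ofReal C ∧
    ∫⁻ ω, ENNReal.ofReal (f (|X ω| / C)) ∂μ ≤ 1} with hSf
  set Sg := {c : ℝ≥0∞ | ∃ C : ℝ, 0 < C ∧ c = ENNReal.ofReal C ∧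
    ∫⁻ ω, ENNReal.ofReal (g (|X ω| / C)) ∂μ ≤ 1} with hSg
  have hMne0 : ENNReal.ofReal M ≠ 0 := by
    simp [ENNReal.ofReal_eq_zero]; linarith
  have hlb : ∀ b ∈ Sg, (ENNReal.ofReal M)⁻¹ * sInf Sf ≤ b := by
    rintro b ⟨K, hK, rfl, hint⟩
    have hmem : ENNReal.ofReal M * ENNReal.ofReal K ∈ Sf := by
      refine ⟨M * K, by positivity, (ENNReal.ofReal_mul hMpos.le).symm, key K hK hint⟩
    have h1 : sInf Sf ≤ ENNReal.ofReal M * ENNReal.ofReal K := sInf_le hmem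
    calc (ENNReal.ofReal M)⁻¹ * sInf Sf
        ≤ (ENNReal.ofReal M)⁻¹ * (ENNReal.ofReal M * ENNReal.ofReal K) := by gcongr
      _ = ENNReal.ofReal K := by
          rw [← mul_assoc, ENNReal.inv_mul_cancel hMne0 ENNReal.ofReal_ne_top, one_mul]
  have h2 : (ENNReal.ofReal M)⁻¹ * sInf Sf ≤ sInf Sg := le_sInf hlb
  have h3 : ENNReal.ofReal M * ((ENNReal.ofReal M)⁻¹ * sInf Sf) ≤ ENNReal.ofReal M * sInf Sg := by
    gcongr
  rw [← mul_assoc, ENNReal.mul_inv_cancel hMne0 ENNReal.ofReal_ne_top, one_mul] at h3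
  exact h3

/-- Two Young functions define (uniformly) equivalent Orlicz norms on all probability
spaces iff they are equivalent. -/
theorem stmt19 (ρ₁ ρ₂ : ℝ → ℝ) (h₁ : IsYoung ρ₁) (h₂ : IsYoung ρ₂) :
    (∃ c C : ℝ, 0 < c ∧ 0 < C ∧
      ∀ (Ω : Type) (_ : MeasurableSpace Ω) (μ : Measure Ω),
        IsProbabilityMeasure μ → ∀ X : Ω → ℝ,
          ENNReal.ofReal c * orliczNorm μ ρ₁ X ≤ orliczNorm μ ρ₂ X ∧
          orliczNorm μ ρ₂ X ≤ ENNReal.ofReal C * orliczNorm μ ρ₁ X) ↔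
    EquivR ρ₁ ρ₂ := by
  constructor
  · rintro ⟨c, C, hc, hC, H⟩
    have hkey : ∀ t ≥ (1:ℝ), ∀ s₁ s₂ : ℝ, 0 < s₁ → 0 < s₂ → ρ₁ s₁ = t → ρ₂ s₂ = t →
        (ENNReal.ofReal c * ENNReal.ofReal (1/s₁) ≤ ENNReal.ofReal (1/s₂) ∧
         ENNReal.ofReal (1/s₂) ≤ ENNReal.ofReal C * ENNReal.ofReal (1/s₁)) := by
      intro t ht s₁ s₂ hs₁ hs₂ hv1 hv2
      have := H Bool _ (bern t) (bern_prob ht) indX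
      rwa [bern_norm h₁ ht hs₁ hv1, bern_norm h₂ ht hs₂ hv2] at this
    constructor
    · apply forward_half h₁ h₂ hc
      intro t ht s₁ s₂ hs₁ hs₂ hv1 hv2
      have h := (hkey t ht s₁ s₂ hs₁ hs₂ hv1 hv2).1
      rw [← ENNReal.ofReal_mul hc.le,
        ENNReal.ofReal_le_ofReal_iff (by positivity)] at h
      rw [mul_one_div, div_le_div_iff₀ hs₁ hs₂] at h
      linarith
    · apply forward_half h₂ h₁ (show (0:ℝ) < 1/C by positivity)
      intro t ht s₂ s₁ hs₂ hs₁ hv2 hv1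
      have h := (hkey t ht s₁ s₂ hs₁ hs₂ hv1 hv2).2
      rw [← ENNReal.ofReal_mul hC.le,
        ENNReal.ofReal_le_ofReal_iff (by positivity)] at h
      rw [mul_one_div, div_le_div_iff₀ hs₂ hs₁] at h
      rw [div_mul_eq_mul_div, div_le_iff₀ hC]
      linarith
  · rintro ⟨d12, d21⟩
    obtain ⟨M₁, hM₁, H₁⟩ := domin_norm h₂ h₁ d21
    obtain ⟨M₂, hM₂, H₂⟩ := domin_norm h₁ h₂ d12
    refine ⟨1/M₂, M₁, by positivity, hM₁, ?_⟩
    intro Ω mΩ μ hμ X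
    refine ⟨?_, H₁ Ω mΩ μ hμ X⟩
    calc ENNReal.ofReal (1/M₂) * orliczNorm μ ρ₁ X
        ≤ ENNReal.ofReal (1/M₂) * (ENNReal.ofReal M₂ * orliczNorm μ ρ₂ X) := by
          gcongr
          exact H₂ Ω mΩ μ hμ X
      _ = orliczNorm μ ρ₂ X := by
          rw [← mul_assoc, ← ENNReal.ofReal_mul (by positivity), one_div,
            inv_mul_cancel₀ hM₂.ne', ENNReal.ofReal_one, one_mul]
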